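/- Let k ≥ 6 be an integer and suppose K_N has a red-blue edge coloring with no blue copy of W_{2k+1}. Let X_1, X_2, X_3 be pairwise disjoint sets of vertices of K_N with |X_3| ≥ 1, such that every edge with endpoints in two distinct sets X_i, X_j (1 ≤ i < j ≤ 3) is blue, and such that there exist U_1 ⊆ X_1 with |U_1| ≥ k+1 and U_2 ⊆ X_2 with |U_2| ≥ k where U_1 and U_2 each induce a complete subgraph of G^R. Then every edge with both endpoints inside the same set X_i (i ∈ {1,2,3}) is red. -/

import Mathlib

def HasNWheel {V : Type*} (G : SimpleGraph V) (n : ℕ) : Prop :=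
  ∃ (w v : V) (c : G.Walk v v), c.IsCycle ∧ c.length = n ∧ ∀ x ∈ c.support, G.Adj w x

lemma hasNWheel_of_fn {V : Type*} (G : SimpleGraph V) (n : ℕ) (hn : 3 ≤ n)
    (w : V) (f : ℕ → V)
    (hinj : ∀ i j, i < j → j < n → f i ≠ f j)
    (hadj : ∀ i, i + 1 < n → G.Adj (f i) (f (i + 1)))
    (hclose : G.Adj (f (n - 1)) (f 0))
    (hw : ∀ i < n, G.Adj w (f i)) :
    HasNWheel G n := by
  -- build path from f i to f 0
  have key : ∀ d i, i + d + 1 = n → 1 ≤ i →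
      ∃ p : G.Walk (f i) (f 0), p.length = d + 1 ∧
        p.support = (List.range' i (d + 1)).map f ++ [f 0] ∧
        p.edges = ((List.range' i d).map fun j => s(f j, f (j + 1))) ++ [s(f (n - 1), f 0)] := by
    intro d
    induction d with
    | zero =>
      intro i hi _
      have hi' : i = n - 1 := by omega
      subst hi'
      exact ⟨SimpleGraph.Walk.cons hclose SimpleGraph.Walk.nil, by simp, by simp, by simp⟩
    | succ d ih =>
      intro i hi h1
      obtain ⟨p, hl, hs, he⟩ := ih (i + 1) (by omega) (by omega)
      have hadj' : G.Adj (f i) (f (i + 1)) := hadj i (by omega)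
      refine ⟨SimpleGraph.Walk.cons hadj' p, by simp [hl], ?_, ?_⟩
      · rw [SimpleGraph.Walk.support_cons, hs]
        simp [List.range'_succ]
      · rw [SimpleGraph.Walk.edges_cons, he, List.range'_succ]
        simp
  obtain ⟨p, hl, hs, he⟩ := key (n - 2) 1 (by omega) le_rfl
  have hadj0 : G.Adj (f 0) (f 1) := hadj 0 (by omega)
  have hpath : p.IsPath := by
    rw [SimpleGraph.Walk.isPath_def, hs]
    rw [List.nodup_append]
    refine ⟨?_, by simp, ?_⟩
    · refine List.Nodup.map_on ?_ (List.nodup_range' _ Nat.one_pos)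
      intro a ha b hb hab
      rw [List.mem_range'_1] at ha hb
      by_contra hne
      rcases Nat.lt_or_ge a b with h | h
      · exact hinj a b h (by omega) hab
      · exact hinj b a (by omega) (by omega) hab.symm
    · intro x hx
      simp only [List.mem_map, List.mem_range'_1] at hx
      obtain ⟨j, hj, rfl⟩ := hx
      simp only [List.mem_singleton, forall_eq]
      exact fun h => hinj 0 j (by omega) (by omega) h.symm
  have hedge : s(f 0, f 1) ∉ p.edges := by
    rw [he]
    simp only [List.mem_append, List.mem_map, List.mem_range'_1, List.mem_singleton]
    rintro (⟨j, hj, hjeq⟩ | hlast)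
    · rw [Sym2.eq_iff] at hjeq
      rcases hjeq with ⟨h1, h2⟩ | ⟨h1, h2⟩
      · exact hinj 0 j (by omega) (by omega) h1.symm
      · rcases Nat.eq_or_lt_of_le hj.1 with h | h
        · exact hinj 0 (j + 1) (by omega) (by omega) h2.symm
        · exact hinj 1 j h (by omega) h1.symm
    · rw [Sym2.eq_iff] at hlast
      rcases hlast with ⟨h1, h2⟩ | ⟨h1, h2⟩
      · exact hinj 0 1 (by omega) (by omega) h2.symm
      · exact hinj 1 (n - 1) (by omega) (by omega) h2

  refine ⟨w, f 0, SimpleGraph.Walk.cons hadj0 p, ?_, by simp [hl]; omega, ?_⟩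
  · rw [SimpleGraph.Walk.cons_isCycle_iff]
    exact ⟨hpath, hedge⟩
  · intro x hx
    rw [SimpleGraph.Walk.support_cons] at hx
    rcases List.mem_cons.mp hx with rfl | hx
    · exact hw 0 (by omega)
    · rw [hs] at hx
      rcases List.mem_append.mp hx with hx | hx
      · simp only [List.mem_map, List.mem_range'_1] at hx
        obtain ⟨j, hj, rfl⟩ := hx
        exact hw j (by omega)
      · rw [List.mem_singleton] at hx
        subst hx
        exact hw 0 (by omega)

lemma blue_wheel_case12 {N k : ℕ} (hk : 6 ≤ k) (G : SimpleGraph (Fin N))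
    (A B : Finset (Fin N)) (hdAB : Disjoint A B)
    (hA : k ≤ A.card) (hB : k + 1 ≤ B.card)
    (hAB : ∀ a ∈ A, ∀ b ∈ B, G.Adj a b)
    (w : Fin N) (hwA : ∀ a ∈ A, G.Adj w a) (hwB : ∀ b ∈ B, G.Adj w b)
    (u v : Fin N) (hu : u ∈ B) (hv : v ∈ B) (huv : G.Adj u v) :
    HasNWheel G (2 * k + 1) := by
  have hk0 : 0 < k := by omega
  have hne : u ≠ v := huv.ne
  set B' : Finset (Fin N) := (B.erase u).erase v with hB'def
  have hB'sub : B' ⊆ B := (Finset.erase_subset _ _).trans (Finset.erase_subset _ _)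
  have hvB : v ∈ B.erase u := Finset.mem_erase.mpr ⟨hne.symm, hv⟩
  have hB' : k - 1 ≤ B'.card := by
    rw [hB'def, Finset.card_erase_of_mem hvB, Finset.card_erase_of_mem hu]
    omega
  have hB'u : u ∉ B' := by simp [hB'def]
  have hB'v : v ∉ B' := by simp [hB'def]
  set fa : ℕ → Fin N := fun m => A.orderEmbOfCardLe hA ⟨m % k, Nat.mod_lt m hk0⟩ with hfa
  set fb : ℕ → Fin N := fun m =>
    B'.orderEmbOfCardLe hB' ⟨m % (k - 1), Nat.mod_lt m (by omega)⟩ with hfb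
  have hfaA : ∀ m, fa m ∈ A := fun m => A.orderEmbOfCardLe_mem hA _
  have hfbB' : ∀ m, fb m ∈ B' := fun m => B'.orderEmbOfCardLe_mem hB' _
  have hfainj : ∀ m m', m < k → m' < k → fa m = fa m' → m = m' := by
    intro m m' hm hm' h
    have := (A.orderEmbOfCardLe hA).injective h
    rw [Fin.mk.injEq, Nat.mod_eq_of_lt hm, Nat.mod_eq_of_lt hm'] at this
    exact this
  have hfbinj : ∀ m m', m < k - 1 → m' < k - 1 → fb m = fb m' → m = m' := by
    intro m m' hm hm' h
    have := (B'.orderEmbOfCardLe hB').injective h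
    rw [Fin.mk.injEq, Nat.mod_eq_of_lt hm, Nat.mod_eq_of_lt hm'] at this
    exact this
  set f : ℕ → Fin N := fun i => match i with
    | 0 => u
    | 1 => v
    | (m + 2) => if m % 2 = 0 then fa (m / 2) else fb ((m - 1) / 2) with hf
  have hval : ∀ i, i < 2 * k + 1 →
      (i = 0 ∧ f i = u) ∨ (i = 1 ∧ f i = v) ∨
      (2 ≤ i ∧ i % 2 = 0 ∧ f i = fa (i / 2 - 1) ∧ i / 2 - 1 < k) ∨
      (3 ≤ i ∧ i % 2 = 1 ∧ f i = fb ((i - 3) / 2) ∧ (i - 3) / 2 < k - 1) := by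
    intro i hi
    match i with
    | 0 => exact Or.inl ⟨rfl, rfl⟩
    | 1 => exact Or.inr (Or.inl ⟨rfl, rfl⟩)
    | (m + 2) =>
      by_cases hm : m % 2 = 0
      · refine Or.inr (Or.inr (Or.inl ⟨by omega, by omega, ?_, by omega⟩))
        rw [hf]
        simp only [hm, if_true]
        congr 1 <;> omega
      · refine Or.inr (Or.inr (Or.inr ⟨by omega, by omega, ?_, by omega⟩))
        rw [hf]
        simp only [hm, if_false]
        congr 1 <;> omega
  have hdisj : ∀ x ∈ A, ∀ y ∈ B, x ≠ y := by
    intro x hx y hy h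
    exact Finset.disjoint_left.mp hdAB hx (h ▸ hy)
  refine hasNWheel_of_fn G (2 * k + 1) (by omega) w f ?_ ?_ ?_ ?_
  · -- injectivity
    intro i j hij hj heq
    have hi := hval i (by omega)
    have hj' := hval j hj
    rcases hi with ⟨hi0, hie⟩ | ⟨hi1, hie⟩ | ⟨hi2, hip, hie, hib⟩ | ⟨hi3, hip, hie, hib⟩ <;>
      rcases hj' with ⟨hj0, hje⟩ | ⟨hj1, hje⟩ | ⟨hj2, hjp, hje, hjb⟩ | ⟨hj3, hjp, hje, hjb⟩ <;>
      rw [hie, hje] at heq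
    all_goals first
      | omega
      | (exact hne heq)
      | (exact hdisj _ (hfaA _) _ hu heq.symm)
      | (exact hdisj _ (hfaA _) _ hv heq.symm)
      | (exact hB'u (heq ▸ hfbB' _))
      | (exact hB'v (heq ▸ hfbB' _))
      | (exact hdisj _ (hfaA _) _ (hB'sub (hfbB' _)) heq)
      | (exact hdisj _ (hfaA _) _ (hB'sub (hfbB' _)) heq.symm)
      | (have := hfainj _ _ hib hjb heq; omega)
      | (have := hfbinj _ _ hib hjb heq; omega)
  · -- adjacency
    intro i hi
    have h1 := hval i (by omega)
    have h2 := hval (i + 1) (by omega)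
    rcases h1 with ⟨hi0, hie⟩ | ⟨hi1, hie⟩ | ⟨hi2, hip, hie, hib⟩ | ⟨hi3, hip, hie, hib⟩ <;>
      rcases h2 with ⟨hj0, hje⟩ | ⟨hj1, hje⟩ | ⟨hj2, hjp, hje, hjb⟩ | ⟨hj3, hjp, hje, hjb⟩ <;>
      rw [hie, hje]
    all_goals first
      | omega
      | exact huv
      | exact (hAB _ (hfaA _) _ hv).symm
      | exact hAB _ (hfaA _) _ (hB'sub (hfbB' _))
      | exact (hAB _ (hfaA _) _ (hB'sub (hfbB' _))).symm
  · -- close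
    have h1 := hval (2 * k + 1 - 1) (by omega)
    have h0 : f 0 = u := rfl
    rcases h1 with ⟨hi0, hie⟩ | ⟨hi1, hie⟩ | ⟨hi2, hip, hie, hib⟩ | ⟨hi3, hip, hie, hib⟩
    · omega
    · omega
    · rw [hie, h0]; exact hAB _ (hfaA _) _ hu
    · omega
  · -- hub
    intro i hi
    rcases hval i hi with ⟨hi0, hie⟩ | ⟨hi1, hie⟩ | ⟨hi2, hip, hie, hib⟩ | ⟨hi3, hip, hie, hib⟩
    · rw [hie]; exact hwB _ hu
    · rw [hie]; exact hwB _ hv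
    · rw [hie]; exact hwA _ (hfaA _)
    · rw [hie]; exact hwB _ (hB'sub (hfbB' _))

lemma blue_wheel_case3 {N k : ℕ} (hk : 6 ≤ k) (G : SimpleGraph (Fin N))
    (A B : Finset (Fin N)) (hdAB : Disjoint A B)
    (hA : k ≤ A.card) (hB : k ≤ B.card)
    (hAB : ∀ a ∈ A, ∀ b ∈ B, G.Adj a b)
    (u v : Fin N) (huv : G.Adj u v)
    (huA : ∀ a ∈ A, G.Adj u a) (huB : ∀ b ∈ B, G.Adj u b)
    (hvA : ∀ a ∈ A, G.Adj v a) (hvB : ∀ b ∈ B, G.Adj v b) :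
    HasNWheel G (2 * k + 1) := by
  have hk0 : 0 < k := by omega
  set fa : ℕ → Fin N := fun m => A.orderEmbOfCardLe hA ⟨m % k, Nat.mod_lt m hk0⟩ with hfa
  set fb : ℕ → Fin N := fun m => B.orderEmbOfCardLe hB ⟨m % k, Nat.mod_lt m hk0⟩ with hfb
  have hfaA : ∀ m, fa m ∈ A := fun m => A.orderEmbOfCardLe_mem hA _
  have hfbB : ∀ m, fb m ∈ B := fun m => B.orderEmbOfCardLe_mem hB _
  have hfainj : ∀ m m', m < k → m' < k → fa m = fa m' → m = m' := by
    intro m m' hm hm' h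
    have := (A.orderEmbOfCardLe hA).injective h
    rw [Fin.mk.injEq, Nat.mod_eq_of_lt hm, Nat.mod_eq_of_lt hm'] at this
    exact this
  have hfbinj : ∀ m m', m < k → m' < k → fb m = fb m' → m = m' := by
    intro m m' hm hm' h
    have := (B.orderEmbOfCardLe hB).injective h
    rw [Fin.mk.injEq, Nat.mod_eq_of_lt hm, Nat.mod_eq_of_lt hm'] at this
    exact this
  set f : ℕ → Fin N := fun i => match i with
    | 0 => v
    | (m + 1) => if m % 2 = 0 then fa (m / 2) else fb ((m - 1) / 2) with hf
  have hval : ∀ i, i < 2 * k + 1 →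
      (i = 0 ∧ f i = v) ∨
      (1 ≤ i ∧ i % 2 = 1 ∧ f i = fa ((i - 1) / 2) ∧ (i - 1) / 2 < k) ∨
      (2 ≤ i ∧ i % 2 = 0 ∧ f i = fb ((i - 2) / 2) ∧ (i - 2) / 2 < k) := by
    intro i hi
    match i with
    | 0 => exact Or.inl ⟨rfl, rfl⟩
    | (m + 1) =>
      by_cases hm : m % 2 = 0
      · refine Or.inr (Or.inl ⟨by omega, by omega, ?_, by omega⟩)
        rw [hf]
        simp only [hm, if_true]
        congr 1 <;> omega
      · refine Or.inr (Or.inr ⟨by omega, by omega, ?_, by omega⟩)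
        rw [hf]
        simp only [hm, if_false]
        congr 1 <;> omega
  have hdisj : ∀ x ∈ A, ∀ y ∈ B, x ≠ y := by
    intro x hx y hy h
    exact Finset.disjoint_left.mp hdAB hx (h ▸ hy)
  refine hasNWheel_of_fn G (2 * k + 1) (by omega) u f ?_ ?_ ?_ ?_
  · intro i j hij hj heq
    have hi := hval i (by omega)
    have hj' := hval j hj
    rcases hi with ⟨hi0, hie⟩ | ⟨hi1, hip, hie, hib⟩ | ⟨hi2, hip, hie, hib⟩ <;>
      rcases hj' with ⟨hj0, hje⟩ | ⟨hj1, hjp, hje, hjb⟩ | ⟨hj2, hjp, hje, hjb⟩ <;>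
      rw [hie, hje] at heq
    all_goals first
      | omega
      | (exact (hvA _ (hfaA _)).ne heq)
      | (exact (hvB _ (hfbB _)).ne heq)
      | (exact hdisj _ (hfaA _) _ (hfbB _) heq)
      | (exact hdisj _ (hfaA _) _ (hfbB _) heq.symm)
      | (have := hfainj _ _ hib hjb heq; omega)
      | (have := hfbinj _ _ hib hjb heq; omega)
  · intro i hi
    have h1 := hval i (by omega)
    have h2 := hval (i + 1) (by omega)
    rcases h1 with ⟨hi0, hie⟩ | ⟨hi1, hip, hie, hib⟩ | ⟨hi2, hip, hie, hib⟩ <;>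
      rcases h2 with ⟨hj0, hje⟩ | ⟨hj1, hjp, hje, hjb⟩ | ⟨hj2, hjp, hje, hjb⟩ <;>
      rw [hie, hje]
    all_goals first
      | omega
      | exact hvA _ (hfaA _)
      | exact hAB _ (hfaA _) _ (hfbB _)
      | exact (hAB _ (hfaA _) _ (hfbB _)).symm
  · have h1 := hval (2 * k + 1 - 1) (by omega)
    have h0 : f 0 = v := rfl
    rcases h1 with ⟨hi0, hie⟩ | ⟨hi1, hip, hie, hib⟩ | ⟨hi2, hip, hie, hib⟩
    · omega
    · omega
    · rw [hie, h0]; exact (hvB _ (hfbB _)).symm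
  · intro i hi
    rcases hval i hi with ⟨hi0, hie⟩ | ⟨hi1, hip, hie, hib⟩ | ⟨hi2, hip, hie, hib⟩
    · rw [hie]; exact huv
    · rw [hie]; exact huA _ (hfaA _)
    · rw [hie]; exact huB _ (hfbB _)

theorem stmt10 (k N : ℕ) (hk : 6 ≤ k)
    (R : SimpleGraph (Fin N))
    (hblue : ¬ HasNWheel Rᶜ (2 * k + 1))
    (X₁ X₂ X₃ : Finset (Fin N))
    (hd12 : Disjoint X₁ X₂) (hd13 : Disjoint X₁ X₃) (hd23 : Disjoint X₂ X₃)
    (hc3 : 1 ≤ X₃.card)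
    (hcross : ∀ u v : Fin N,
      ((u ∈ X₁ ∧ v ∈ X₂) ∨ (u ∈ X₁ ∧ v ∈ X₃) ∨ (u ∈ X₂ ∧ v ∈ X₃)) → Rᶜ.Adj u v)
    (hU1 : ∃ U₁ ⊆ X₁, k + 1 ≤ U₁.card ∧ ∀ x ∈ U₁, ∀ y ∈ U₁, x ≠ y → R.Adj x y)
    (hU2 : ∃ U₂ ⊆ X₂, k ≤ U₂.card ∧ ∀ x ∈ U₂, ∀ y ∈ U₂, x ≠ y → R.Adj x y) :
    (∀ u ∈ X₁, ∀ v ∈ X₁, u ≠ v → R.Adj u v) ∧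
    (∀ u ∈ X₂, ∀ v ∈ X₂, u ≠ v → R.Adj u v) ∧
    (∀ u ∈ X₃, ∀ v ∈ X₃, u ≠ v → R.Adj u v) := by
  obtain ⟨U₁, hU1sub, hU1card, hU1red⟩ := hU1
  obtain ⟨U₂, hU2sub, hU2card, hU2red⟩ := hU2
  obtain ⟨z, hz3⟩ := Finset.card_pos.mp hc3
  have hX1card : k + 1 ≤ X₁.card := le_trans hU1card (Finset.card_le_card hU1sub)
  have hX2card : k ≤ X₂.card := le_trans hU2card (Finset.card_le_card hU2sub)
  have h12 : ∀ a ∈ X₂, ∀ b ∈ X₁, Rᶜ.Adj a b := fun a ha b hb =>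
    (hcross b a (Or.inl ⟨hb, ha⟩)).symm
  have h3A : ∀ a ∈ X₁, Rᶜ.Adj z a := fun a ha =>
    (hcross a z (Or.inr (Or.inl ⟨ha, hz3⟩))).symm
  have h3B : ∀ b ∈ X₂, Rᶜ.Adj z b := fun b hb =>
    (hcross b z (Or.inr (Or.inr ⟨hb, hz3⟩))).symm
  refine ⟨?_, ?_, ?_⟩
  · -- edges inside X₁
    intro u hu v hv hne
    by_contra hred
    exact hblue (blue_wheel_case12 hk Rᶜ X₂ X₁ hd12.symm hX2card hX1card h12 z h3B h3A
      u v hu hv ((R.compl_adj u v).mpr ⟨hne, hred⟩))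
  · -- edges inside X₂
    intro u hu v hv hne
    by_contra hred
    have hbuv : Rᶜ.Adj u v := (R.compl_adj u v).mpr ⟨hne, hred⟩
    have h21 : ∀ a ∈ X₁, ∀ b ∈ X₂, Rᶜ.Adj a b := fun a ha b hb => hcross a b (Or.inl ⟨ha, hb⟩)
    have hX2big : k + 1 ≤ X₂.card := by
      by_cases hcase : u ∈ U₂ ∧ v ∈ U₂
      · exact absurd (hU2red u hcase.1 v hcase.2 hne) hred
      · rcases not_and_or.mp hcase with h | h
        · calc k + 1 ≤ U₂.card + 1 := by omega
            _ = (insert u U₂).card := (Finset.card_insert_of_notMem h).symm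
            _ ≤ X₂.card := Finset.card_le_card (Finset.insert_subset hu hU2sub)
        · calc k + 1 ≤ U₂.card + 1 := by omega
            _ = (insert v U₂).card := (Finset.card_insert_of_notMem h).symm
            _ ≤ X₂.card := Finset.card_le_card (Finset.insert_subset hv hU2sub)
    exact hblue (blue_wheel_case12 hk Rᶜ X₁ X₂ hd12 (by omega) hX2big h21 z h3A h3B
      u v hu hv hbuv)
  · -- edges inside X₃
    intro u hu v hv hne
    by_contra hred
    have hbuv : Rᶜ.Adj u v := (R.compl_adj u v).mpr ⟨hne, hred⟩
    have h21 : ∀ a ∈ X₁, ∀ b ∈ X₂, Rᶜ.Adj a b := fun a ha b hb => hcross a b (Or.inl ⟨ha, hb⟩)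
    have huA : ∀ a ∈ X₁, Rᶜ.Adj u a := fun a ha => (hcross a u (Or.inr (Or.inl ⟨ha, hu⟩))).symm
    have huB : ∀ b ∈ X₂, Rᶜ.Adj u b := fun b hb => (hcross b u (Or.inr (Or.inr ⟨hb, hu⟩))).symm
    have hvA : ∀ a ∈ X₁, Rᶜ.Adj v a := fun a ha => (hcross a v (Or.inr (Or.inl ⟨ha, hv⟩))).symm
    have hvB : ∀ b ∈ X₂, Rᶜ.Adj v b := fun b hb => (hcross b v (Or.inr (Or.inr ⟨hb, hv⟩))).symm
    exact hblue (blue_wheel_case3 hk Rᶜ X₁ X₂ hd12 (by omega) hX2card h21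
      u v hbuv huA huB hvA hvB)
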